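/- For every k ≥ 1, every γ ∈ (0,1], and every h ∈ Δ_k, let q = Π(h/γ) and let m = #{j ∈ {1,…,k} : q_j > 0} be the number of nonzero coordinates of q. Then for every index i ∈ {1,…,k}, it holds that q_i ≥ (m·h_i − 1)/(γ·m) + 1/m. -/

import Mathlib

open scoped BigOperators

/-- The probability simplex in `ℝ^k`. -/
def simplex (k : ℕ) : Set (EuclideanSpace ℝ (Fin k)) :=
  {p | (∀ i, 0 ≤ p i) ∧ ∑ i, p i = 1}

/-- `q` is the Euclidean (L2) metric projection of `x` onto the probability simplex. -/
def IsL2ProjOnSimplex (k : ℕ) (x q : EuclideanSpace ℝ (Fin k)) : Prop :=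
  q ∈ simplex k ∧ ∀ r ∈ simplex k, ‖q - x‖ ≤ ‖r - x‖

lemma sumsq_le {k : ℕ} {x q r : EuclideanSpace ℝ (Fin k)}
    (h : ‖q - x‖ ≤ ‖r - x‖) :
    ∑ l, (q l - x l)^2 ≤ ∑ l, (r l - x l)^2 := by
  have h1 := pow_le_pow_left₀ (norm_nonneg (q - x)) h 2
  rw [EuclideanSpace.norm_eq, EuclideanSpace.norm_eq,
    Real.sq_sqrt (by positivity), Real.sq_sqrt (by positivity)] at h1
  simpa [Real.norm_eq_abs, sq_abs] using h1

lemma key {k : ℕ} {x q : EuclideanSpace ℝ (Fin k)}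
    (hq : IsL2ProjOnSimplex k x q) (i j : Fin k) (hj : 0 < q j) :
    x i - q i ≤ x j - q j := by
  rcases eq_or_ne i j with rfl | hij
  · exact le_refl _
  have hij' : i ∈ Finset.univ.erase j := Finset.mem_erase.2 ⟨hij, Finset.mem_univ i⟩
  have split : ∀ v : Fin k → ℝ,
      ∑ l, v l = v j + (v i + ∑ l ∈ (Finset.univ.erase j).erase i, v l) := by
    intro v
    rw [← Finset.add_sum_erase _ v (Finset.mem_univ j), ← Finset.add_sum_erase _ v hij']
  have step : ∀ ε : ℝ, 0 < ε → ε ≤ q j → (x i - q i) - (x j - q j) ≤ ε := by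
    intro ε hε hεj
    set r : EuclideanSpace ℝ (Fin k) :=
      WithLp.toLp 2 (Function.update (Function.update q i (q i + ε)) j (q j - ε)) with hr
    have hri : r i = q i + ε := by
      rw [hr, WithLp.ofLp_toLp]; rw [Function.update_of_ne hij, Function.update_self]
    have hrj : r j = q j - ε := by rw [hr, WithLp.ofLp_toLp]; rw [Function.update_self]
    have hrl : ∀ l, l ≠ i → l ≠ j → r l = q l := by
      intro l hli hlj
      rw [hr, WithLp.ofLp_toLp, Function.update_of_ne hlj, Function.update_of_ne hli]
    have hrmem : r ∈ simplex k := by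
      constructor
      · intro l
        rcases eq_or_ne l i with rfl | hli
        · rw [hri]; have := hq.1.1 l; linarith
        rcases eq_or_ne l j with rfl | hlj
        · rw [hrj]; linarith
        · rw [hrl l hli hlj]; exact hq.1.1 l
      · have h1 : ∑ l, r l = r j + (r i + ∑ l ∈ (Finset.univ.erase j).erase i, r l) :=
          split (fun l => r l)
        have h2 : ∑ l, q l = q j + (q i + ∑ l ∈ (Finset.univ.erase j).erase i, q l) :=
          split (fun l => q l)
        have htail : ∑ l ∈ (Finset.univ.erase j).erase i, r l
            = ∑ l ∈ (Finset.univ.erase j).erase i, q l := by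
          refine Finset.sum_congr rfl fun l hl => ?_
          simp only [Finset.mem_erase] at hl
          exact hrl l hl.1 hl.2.1
        have hq2 : ∑ l, q l = 1 := hq.1.2
        rw [h1, htail, hri, hrj]
        rw [h2] at hq2
        show (q j - ε) + ((q i + ε) + _) = 1
        linarith
    have hsum := sumsq_le (hq.2 r hrmem)
    have h1 : ∑ l, (r l - x l)^2
        = (r j - x j)^2 + ((r i - x i)^2 + ∑ l ∈ (Finset.univ.erase j).erase i, (r l - x l)^2) :=
      split (fun l => (r l - x l)^2)
    have h2 : ∑ l, (q l - x l)^2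
        = (q j - x j)^2 + ((q i - x i)^2 + ∑ l ∈ (Finset.univ.erase j).erase i, (q l - x l)^2) :=
      split (fun l => (q l - x l)^2)
    have htail : ∑ l ∈ (Finset.univ.erase j).erase i, (r l - x l)^2
        = ∑ l ∈ (Finset.univ.erase j).erase i, (q l - x l)^2 := by
      refine Finset.sum_congr rfl fun l hl => ?_
      simp only [Finset.mem_erase] at hl
      rw [hrl l hl.1 hl.2.1]
    rw [h1, h2, htail, hri, hrj] at hsum
    nlinarith [hsum]
  by_contra hcon
  push_neg at hcon
  have ha0 : 0 < (x i - q i) - (x j - q j) := by linarith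
  have := step (min (q j) (((x i - q i) - (x j - q j))/2)) (by positivity) (min_le_left _ _)
  have h2 : min (q j) (((x i - q i) - (x j - q j))/2) ≤ ((x i - q i) - (x j - q j))/2 :=
    min_le_right _ _
  linarith

theorem stmt_10 (k : ℕ) (hk : 1 ≤ k) (γ : ℝ) (hγ : γ ∈ Set.Ioc (0 : ℝ) 1)
    (h : EuclideanSpace ℝ (Fin k)) (hh : h ∈ simplex k)
    (q : EuclideanSpace ℝ (Fin k)) (hq : IsL2ProjOnSimplex k (γ⁻¹ • h) q)
    (m : ℕ) (hm : m = (Finset.univ.filter fun j => 0 < q j).card) :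
    ∀ i, q i ≥ ((m : ℝ) * h i - 1) / (γ * (m : ℝ)) + 1 / (m : ℝ) := by
  intro i
  have hγ0 : 0 < γ := hγ.1
  set x : EuclideanSpace ℝ (Fin k) := γ⁻¹ • h with hxdef
  have hx : ∀ l, x l = γ⁻¹ * h l := fun l => rfl
  set S : Finset (Fin k) := Finset.univ.filter fun j => 0 < q j with hS
  -- S is nonempty
  have hSne : S.Nonempty := by
    by_contra hcon
    rw [Finset.not_nonempty_iff_eq_empty] at hcon
    have hz : ∀ l, q l = 0 := by
      intro l
      by_contra hl
      have : l ∈ S := by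
        rw [hS, Finset.mem_filter]
        exact ⟨Finset.mem_univ l, lt_of_le_of_ne (hq.1.1 l) (Ne.symm hl)⟩
      rw [hcon] at this; exact absurd this (Finset.notMem_empty l)
    have := hq.1.2
    rw [Finset.sum_congr rfl (fun l _ => hz l)] at this
    simp at this
  obtain ⟨j₀, hj₀S⟩ := hSne
  have hj₀ : 0 < q j₀ := (Finset.mem_filter.1 hj₀S).2
  set τ : ℝ := x j₀ - q j₀ with hτ
  clear_value τ
  have hconst : ∀ j ∈ S, x j - q j = τ := by
    intro j hjS
    have hjpos : 0 < q j := (Finset.mem_filter.1 hjS).2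
    rw [hτ]
    exact le_antisymm (key hq j j₀ hj₀) (key hq j₀ j hjpos)
  -- sum of q over S is 1
  have hsumq : ∑ j ∈ S, q j = 1 := by
    rw [Finset.sum_subset (Finset.subset_univ S) (fun l _ hl => ?_)]
    · exact hq.1.2
    · rw [hS, Finset.mem_filter] at hl
      push_neg at hl
      exact le_antisymm (hl (Finset.mem_univ l)) (hq.1.1 l)
  -- sum of x over S ≤ γ⁻¹
  have hsumx : ∑ j ∈ S, x j ≤ γ⁻¹ := by
    have h1 : ∑ j ∈ S, x j ≤ ∑ j, x j :=
      Finset.sum_le_sum_of_subset_of_nonneg (Finset.subset_univ S)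
        (fun l _ _ => by rw [hx]; exact mul_nonneg (inv_nonneg.2 hγ0.le) (hh.1 l))
    have h2 : ∑ j, x j = γ⁻¹ := by
      simp only [hx, ← Finset.mul_sum, hh.2, mul_one]
    linarith
  have hmpos : 0 < (m : ℝ) := by
    rw [hm]
    exact_mod_cast Finset.card_pos.2 ⟨j₀, hj₀S⟩
  -- m τ ≤ γ⁻¹ - 1
  have hmτ : (m : ℝ) * τ ≤ γ⁻¹ - 1 := by
    have h1 : ∑ j ∈ S, (x j - q j) = (S.card : ℝ) * τ := by
      rw [Finset.sum_congr rfl hconst, Finset.sum_const, nsmul_eq_mul]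
    rw [Finset.sum_sub_distrib, hsumq] at h1
    rw [hm]
    rw [← h1]
    linarith [hsumx]
  have hkey : x i - q i ≤ τ := by rw [hτ]; exact key hq i j₀ hj₀
  have hγinv : γ * γ⁻¹ = 1 := mul_inv_cancel₀ hγ0.ne'
  have main : (m : ℝ) * h i - 1 + γ ≤ γ * m * q i := by
    have key2 : γ⁻¹ * h i - τ ≤ q i := by
      have h2 := hkey; rw [hx i] at h2; linarith
    have e1 : γ * (m:ℝ) * (γ⁻¹ * h i - τ) ≤ γ * (m:ℝ) * q i :=
      mul_le_mul_of_nonneg_left key2 (by positivity)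
    have e3 : γ * (m:ℝ) * (γ⁻¹ * h i - τ) = (γ * γ⁻¹) * ((m:ℝ) * h i) - γ * ((m:ℝ) * τ) := by
      ring
    have e4 : γ * ((m:ℝ) * τ) ≤ γ * (γ⁻¹ - 1) := mul_le_mul_of_nonneg_left hmτ hγ0.le
    have e5 : γ * (γ⁻¹ - 1) = 1 - γ := by rw [mul_sub, hγinv]; ring
    rw [e3, hγinv, one_mul] at e1
    linarith
  rw [ge_iff_le, div_add_div _ _ (by positivity) hmpos.ne', div_le_iff₀ (by positivity)]
  nlinarith [mul_le_mul_of_nonneg_right main hmpos.le, hmpos]
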